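/- Let m, N be positive integers and α, β ∈ (0,1). Suppose the synthetic scores S̃_1,…,S̃_N have a continuous joint marginal distribution (so they are almost surely pairwise distinct and almost surely distinct from any fixed candidate score value). Let Ĉ(x) = { y : T(s(x,y)) ≤ Q̃_{1−α} } be the SPI prediction set, and let Ĉ^fast(x) = { y : s(x,y) ≤ max{ min{ Q̃′_{1−α}, S_{(R̃^−)} }, S_{(R̃^+)} } }, where R̃^± = max{ r ∈ {1,…,m+1} : R_r^± ≤ ⌈(1−α)(N+1)⌉ }, S_{(m+1)} = +∞, and S_{(r)} denotes the r-th smallest real calibration score. Then for a test point (X_{m+1}, Y_{m+1}), P( {Y_{m+1} ∈ Ĉ(X_{m+1})} Δ {Y_{m+1} ∈ Ĉ^fast(X_{m+1})} ) = 0, where Δ denotes the symmetric difference of events. -/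
import Mathlib


open MeasureTheory ProbabilityTheory Finset

noncomputable section

/-- The `r`-th order statistic (0-indexed) of a finite tuple of reals: the values
sorted in increasing order. -/
def orderStat {n : ℕ} (f : Fin n → ℝ) : Fin n → ℝ := f ∘ Tuple.sort f

/-- The probability mass function `p_{m,N,r}(k)` of the `r`-th order statistic of a
sample of size `m+1` drawn without replacement from a population of size `N+m+1`. -/
def pWindow (m N r k : ℕ) : ℝ :=
  (((k + r - 2).choose (r - 1) * (N + m + 2 - k - r).choose (m + 1 - r) : ℕ) : ℝ) /
    (((N + m + 1).choose (m + 1) : ℕ) : ℝ)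

/-- `F_{m,N,r}(t) = Σ_{k=1}^t p_{m,N,r}(k)`, with `F(0) = 0`. -/
def Fwindow (m N r t : ℕ) : ℝ := ∑ k ∈ Finset.Icc 1 t, pWindow m N r k

/-- `R_r^- = max {t ∈ {1,…,N+1} : F_{m,N,r}(t-1) ≤ β/2}`. -/
def Rminus (m N : ℕ) (β : ℝ) (r : ℕ) : ℕ :=
  sSup {t | t ∈ Finset.Icc 1 (N + 1) ∧ Fwindow m N r (t - 1) ≤ β / 2}

/-- `R_r^+ = min {t ∈ {1,…,N+1} : F_{m,N,r}(t) ≥ 1 - β/2}`. -/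
def Rplus (m N : ℕ) (β : ℝ) (r : ℕ) : ℕ :=
  sInf {t | t ∈ Finset.Icc 1 (N + 1) ∧ 1 - β / 2 ≤ Fwindow m N r t}

/-- `S̃_{(t)}`, the `t`-th smallest synthetic score for `t ∈ {1,…,N}`, with the
convention `S̃_{(N+1)} = +∞` (value in `EReal`). -/
def synthSorted (N : ℕ) (g : Fin N → ℝ) (t : ℕ) : EReal :=
  if h : 1 ≤ t ∧ t ≤ N then ((orderStat g ⟨t - 1, by omega⟩ : ℝ) : EReal) else ⊤

/-- The lower window endpoint `L_m(r) = S̃_{(R_r^-)}`. -/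
def windowLo (m N : ℕ) (β : ℝ) (g : Fin N → ℝ) (r : ℕ) : EReal :=
  synthSorted N g (Rminus m N β r)

/-- The upper window endpoint `U_m(r) = S̃_{(R_r^+)}`. -/
def windowHi (m N : ℕ) (β : ℝ) (g : Fin N → ℝ) (r : ℕ) : EReal :=
  synthSorted N g (Rplus m N β r)

/-- The rank `r_η = 1 + #{i : S_i < η}` of `η` among the real calibration scores. -/
def rankOf (m : ℕ) (S : Fin m → ℝ) (η : ℝ) : ℕ :=
  1 + (Finset.univ.filter fun i => S i < η).card

/-- The lower nearest neighbor `NN_m^-(r,η)`: the largest synthetic order statistic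
`S̃_{(j)}` with `R_r^- ≤ j ≤ R_r^+` and `S̃_{(j)} ≤ η`. -/
def NNminus (m N : ℕ) (β : ℝ) (g : Fin N → ℝ) (r : ℕ) (η : ℝ) : EReal :=
  sSup {x : EReal | ∃ j : ℕ, Rminus m N β r ≤ j ∧ j ≤ Rplus m N β r ∧
    x = synthSorted N g j ∧ x ≤ (η : EReal)}

/-- The score transporter `T`. -/
def transport (m N : ℕ) (β : ℝ) (S : Fin m → ℝ) (g : Fin N → ℝ) (η : ℝ) : EReal :=
  if windowHi m N β g (rankOf m S η) ≤ (η : EReal) then windowHi m N β g (rankOf m S η)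
  else if windowLo m N β g (rankOf m S η) ≤ (η : EReal) then NNminus m N β g (rankOf m S η) η
  else windowLo m N β g (rankOf m S η)

/-- The quantile index `⌈(1-α)(N+1)⌉`. -/
def qIdx (N : ℕ) (α : ℝ) : ℕ := ⌈(1 - α) * ((N : ℝ) + 1)⌉₊

/-- `Q̃_{1-α}`, the `⌈(1-α)(N+1)⌉`-th smallest synthetic score (`+∞` if the index is `N+1`). -/
def synthQuantile (N : ℕ) (g : Fin N → ℝ) (α : ℝ) : EReal := synthSorted N g (qIdx N α)

/-- `S_{(t)}` for the real calibration scores, `t ∈ {1,…,m}`, with the conventions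
`S_{(m+1)} = +∞` and `-∞` for out-of-range indices (e.g. an empty maximum). -/
def realSorted (m : ℕ) (S : Fin m → ℝ) (t : ℕ) : EReal :=
  if h : 1 ≤ t ∧ t ≤ m then ((orderStat S ⟨t - 1, by omega⟩ : ℝ) : EReal)
  else if t = m + 1 then ⊤ else ⊥

/-- Total variation distance between two (probability) measures on `ℝ`. -/
def tvDist (μ ν : Measure ℝ) : ℝ :=
  ⨆ A : {s : Set ℝ // MeasurableSet s}, |(μ A.1).toReal - (ν A.1).toReal|

/-- The law of the `i`-th order statistic of `n` i.i.d. draws from `P`. -/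
def orderStatLaw (n : ℕ) (P : Measure ℝ) (i : Fin n) : Measure ℝ :=
  (Measure.pi fun _ : Fin n => P).map fun f => orderStat f i

end

/-- `R̃^- = max{r ∈ {1,…,m+1} : R_r^- ≤ ⌈(1−α)(N+1)⌉}` (`0` if no such `r`). -/
noncomputable def RtilMinus (m N : ℕ) (β α : ℝ) : ℕ :=
  sSup {r | r ∈ Finset.Icc 1 (m + 1) ∧ Rminus m N β r ≤ qIdx N α}

/-- `R̃^+ = max{r ∈ {1,…,m+1} : R_r^+ ≤ ⌈(1−α)(N+1)⌉}` (`0` if no such `r`). -/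
noncomputable def RtilPlus (m N : ℕ) (β α : ℝ) : ℕ :=
  sSup {r | r ∈ Finset.Icc 1 (m + 1) ∧ Rplus m N β r ≤ qIdx N α}

/-- The threshold `max{min{Q̃′_{1−α}, S_{(R̃^−)}}, S_{(R̃^+)}}` of the fast prediction set,
where `Q̃′_{1−α}` is the `(⌈(1−α)(N+1)⌉+1)`-th smallest synthetic score, `S_{(m+1)} = +∞`,
and `S_{(R̃^±)} = -∞` if the corresponding maximum is over an empty set. -/
noncomputable def fastThreshold (m N : ℕ) (β α : ℝ) (S : Fin m → ℝ) (g : Fin N → ℝ) : EReal :=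
  max (min (synthSorted N g (qIdx N α + 1)) (realSorted m S (RtilMinus m N β α)))
    (realSorted m S (RtilPlus m N β α))


namespace SPIAux

lemma choose_mul_congr {a b c d a' b' c' d' : ℕ} (h1 : a = a') (h2 : b = b')
    (h3 : c = c') (h4 : d = d') :
    a.choose b * c.choose d = a'.choose b' * c'.choose d' := by
  subst h1; subst h2; subst h3; subst h4; rfl

lemma base_sum (b n : ℕ) :
    ∑ i ∈ Finset.range n, (i + b).choose b = (n + b).choose (b + 1) := by
  induction n with
  | zero => simp [Nat.choose_eq_zero_of_lt (Nat.lt_succ_self b)]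
  | succ n ih =>
    rw [Finset.sum_range_succ, ih, show n + 1 + b = (n + b) + 1 by omega,
      Nat.choose_succ_succ (n + b) b, Nat.succ_eq_add_one]
    omega

lemma step_sum (a b N : ℕ) : ∀ t, t ≤ N + 1 →
    (∑ i ∈ Finset.range t, (i + a + 1).choose (a + 1) * (N + b - i).choose b)
      + (t + a).choose (a + 1) * (N + b + 1 - t).choose (b + 1)
    = ∑ i ∈ Finset.range t, (i + a).choose a * (N + b + 1 - i).choose (b + 1) := by
  intro t
  induction t with
  | zero => intro _; simp [Nat.choose_eq_zero_of_lt (Nat.lt_succ_self a)]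
  | succ t ih =>
    intro ht
    rw [Finset.sum_range_succ, Finset.sum_range_succ, ← ih (by omega)]
    have key : (t + a + 1).choose (a + 1) * (N + b - t).choose b
        + (t + 1 + a).choose (a + 1) * (N + b + 1 - (t + 1)).choose (b + 1)
        = (t + a).choose (a + 1) * (N + b + 1 - t).choose (b + 1)
          + (t + a).choose a * (N + b + 1 - t).choose (b + 1) := by
      rw [show N + b + 1 - (t + 1) = N + b - t by omega,
        show t + 1 + a = t + a + 1 by omega,
        show N + b + 1 - t = (N + b - t) + 1 by omega,
        Nat.choose_succ_succ (N + b - t) b, Nat.succ_eq_add_one,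
        show t + a + 1 = (t + a) + 1 by omega,
        Nat.choose_succ_succ (t + a) a, Nat.succ_eq_add_one]
      ring
    linarith [key]

lemma T_sum (N : ℕ) : ∀ a b : ℕ,
    ∑ i ∈ Finset.range (N + 1), (i + a).choose a * (N + b - i).choose b
      = (N + a + b + 1).choose (a + b + 1) := by
  intro a
  induction a with
  | zero =>
    intro b
    have h1 : ∑ i ∈ Finset.range (N + 1), (i + 0).choose 0 * (N + b - i).choose b
        = ∑ i ∈ Finset.range (N + 1), ((N + 1 - 1 - i) + b).choose b := by
      refine Finset.sum_congr rfl fun i hi => ?_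
      rw [Finset.mem_range] at hi
      rw [Nat.choose_zero_right, one_mul]
      congr 1
      omega
    rw [h1, Finset.sum_range_reflect (fun i => (i + b).choose b) (N + 1), base_sum]
    congr 1 <;> omega
  | succ a ih =>
    intro b
    have hs := step_sum a b N (N + 1) le_rfl
    have h0 : (N + 1 + a).choose (a + 1) * (N + b + 1 - (N + 1)).choose (b + 1) = 0 := by
      rw [show N + b + 1 - (N + 1) = b by omega,
        Nat.choose_eq_zero_of_lt (Nat.lt_succ_self b), mul_zero]
    rw [h0, add_zero] at hs
    have h1 : ∑ i ∈ Finset.range (N + 1), (i + (a + 1)).choose (a + 1) * (N + b - i).choose b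
        = ∑ i ∈ Finset.range (N + 1), (i + a).choose a * (N + (b + 1) - i).choose (b + 1) := by
      calc ∑ i ∈ Finset.range (N + 1), (i + (a + 1)).choose (a + 1) * (N + b - i).choose b
          = ∑ i ∈ Finset.range (N + 1), (i + a + 1).choose (a + 1) * (N + b - i).choose b :=
            Finset.sum_congr rfl fun i _ => choose_mul_congr (by omega) rfl rfl rfl
        _ = ∑ i ∈ Finset.range (N + 1), (i + a).choose a * (N + b + 1 - i).choose (b + 1) := hs
        _ = ∑ i ∈ Finset.range (N + 1), (i + a).choose a * (N + (b + 1) - i).choose (b + 1) :=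
            Finset.sum_congr rfl fun i _ => choose_mul_congr rfl rfl (by omega) rfl
    rw [h1, ih (b + 1)]
    congr 1 <;> omega


/-! ### Fwindow facts -/

lemma choose_cast_ne (m N : ℕ) : (((N + m + 1).choose (m + 1) : ℕ) : ℝ) ≠ 0 := by
  have := Nat.choose_pos (show m + 1 ≤ N + m + 1 by omega)
  exact_mod_cast this.ne'

lemma Fwindow_eq_sum (m N r t : ℕ) : Fwindow m N r t =
    ((∑ k ∈ Finset.Icc 1 t,
        (k + r - 2).choose (r - 1) * (N + m + 2 - k - r).choose (m + 1 - r) : ℕ) : ℝ)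
      / (((N + m + 1).choose (m + 1) : ℕ) : ℝ) := by
  unfold Fwindow pWindow
  rw [← Finset.sum_div]
  push_cast
  rfl

lemma sum_reindex (m N r t : ℕ) (hr1 : 1 ≤ r) (hrm : r ≤ m + 1) (ht : t ≤ N + 1) :
    ∑ k ∈ Finset.Icc 1 t, (k + r - 2).choose (r - 1) * (N + m + 2 - k - r).choose (m + 1 - r)
    = ∑ i ∈ Finset.range t,
        (i + (r - 1)).choose (r - 1) * (N + (m + 1 - r) - i).choose (m + 1 - r) := by
  rw [← Finset.Ico_add_one_right_eq_Icc, Finset.sum_Ico_eq_sum_range]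
  refine Finset.sum_congr (by congr 1) fun i hi => ?_
  rw [Finset.mem_range] at hi
  exact choose_mul_congr (by omega) rfl (by omega) (by omega)

lemma Fwindow_total (m N r : ℕ) (hr1 : 1 ≤ r) (hrm : r ≤ m + 1) :
    Fwindow m N r (N + 1) = 1 := by
  rw [Fwindow_eq_sum, sum_reindex m N r (N + 1) hr1 hrm le_rfl, T_sum,
    show N + (r - 1) + (m + 1 - r) + 1 = N + m + 1 by omega,
    show r - 1 + (m + 1 - r) + 1 = m + 1 by omega]
  exact div_self (choose_cast_ne m N)

lemma pWindow_nonneg (m N r k : ℕ) : 0 ≤ pWindow m N r k := by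
  unfold pWindow
  positivity

lemma Fwindow_zero (m N r : ℕ) : Fwindow m N r 0 = 0 := by
  unfold Fwindow
  rw [show Finset.Icc 1 0 = ∅ from Finset.Icc_eq_empty (by omega), Finset.sum_empty]

lemma Fwindow_mono_t (m N r : ℕ) {t t' : ℕ} (h : t ≤ t') :
    Fwindow m N r t ≤ Fwindow m N r t' :=
  Finset.sum_le_sum_of_subset_of_nonneg (Finset.Icc_subset_Icc_right h)
    fun k _ _ => pWindow_nonneg m N r k

lemma Fwindow_anti_step (m N r t : ℕ) (hr1 : 1 ≤ r) (hrm : r + 1 ≤ m + 1) (ht : t ≤ N + 1) :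
    Fwindow m N (r + 1) t ≤ Fwindow m N r t := by
  rw [Fwindow_eq_sum, Fwindow_eq_sum]
  have hC : (0 : ℝ) < (((N + m + 1).choose (m + 1) : ℕ) : ℝ) :=
    lt_of_le_of_ne (Nat.cast_nonneg _) (Ne.symm (choose_cast_ne m N))
  rw [div_le_div_iff_of_pos_right hC, Nat.cast_le]
  rw [sum_reindex m N (r + 1) t (by omega) (by omega) ht,
    sum_reindex m N r t hr1 (by omega) ht]
  have hs := step_sum (r - 1) (m - r) N t ht
  calc ∑ i ∈ Finset.range t,
        (i + (r + 1 - 1)).choose (r + 1 - 1) * (N + (m + 1 - (r + 1)) - i).choose (m + 1 - (r + 1))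
      = ∑ i ∈ Finset.range t,
        (i + (r - 1) + 1).choose ((r - 1) + 1) * (N + (m - r) - i).choose (m - r) :=
        Finset.sum_congr rfl fun i _ => choose_mul_congr (by omega) (by omega) (by omega) (by omega)
    _ ≤ ∑ i ∈ Finset.range t,
        (i + (r - 1)).choose (r - 1) * (N + (m - r) + 1 - i).choose ((m - r) + 1) :=
        Nat.le.intro hs
    _ = ∑ i ∈ Finset.range t,
        (i + (r - 1)).choose (r - 1) * (N + (m + 1 - r) - i).choose (m + 1 - r) :=
        Finset.sum_congr rfl fun i _ => choose_mul_congr rfl rfl (by omega) (by omega)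

lemma Fwindow_anti (m N : ℕ) {r r' t : ℕ} (hr1 : 1 ≤ r) (hrr : r ≤ r')
    (hrm : r' ≤ m + 1) (ht : t ≤ N + 1) :
    Fwindow m N r' t ≤ Fwindow m N r t := by
  induction r', hrr using Nat.le_induction with
  | base => exact le_rfl
  | succ r' hrr ih =>
    exact le_trans (Fwindow_anti_step m N r' t (by omega) (by omega) ht) (ih (by omega))

/-! ### Window endpoints -/


lemma Rminus_bddAbove (m N : ℕ) (β : ℝ) (r : ℕ) :
    BddAbove {t | t ∈ Finset.Icc 1 (N + 1) ∧ Fwindow m N r (t - 1) ≤ β / 2} :=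
  ⟨N + 1, fun x hx => (Finset.mem_Icc.1 hx.1).2⟩

lemma Rminus_spec (m N : ℕ) (β : ℝ) (hβ : β ∈ Set.Ioo (0 : ℝ) 1) (r : ℕ) :
    Rminus m N β r ∈ Finset.Icc 1 (N + 1) ∧ Fwindow m N r (Rminus m N β r - 1) ≤ β / 2 := by
  have h : Rminus m N β r ∈
      {t | t ∈ Finset.Icc 1 (N + 1) ∧ Fwindow m N r (t - 1) ≤ β / 2} := by
    apply Nat.sSup_mem
    · refine ⟨1, Finset.mem_Icc.2 (by omega), ?_⟩
      rw [show (1 : ℕ) - 1 = 0 from rfl, Fwindow_zero]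
      linarith [hβ.1]
    · exact Rminus_bddAbove m N β r
  exact h

lemma Rplus_spec (m N : ℕ) (β : ℝ) (hβ : β ∈ Set.Ioo (0 : ℝ) 1) (r : ℕ)
    (hr1 : 1 ≤ r) (hrm : r ≤ m + 1) :
    Rplus m N β r ∈ Finset.Icc 1 (N + 1) ∧ 1 - β / 2 ≤ Fwindow m N r (Rplus m N β r) := by
  have h : Rplus m N β r ∈
      {t | t ∈ Finset.Icc 1 (N + 1) ∧ 1 - β / 2 ≤ Fwindow m N r t} := by
    apply Nat.sInf_mem
    refine ⟨N + 1, Finset.mem_Icc.2 (by omega), ?_⟩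
    rw [Fwindow_total m N r hr1 hrm]
    linarith [hβ.1]
  exact h

lemma Rminus_le_Rplus (m N : ℕ) (β : ℝ) (hβ : β ∈ Set.Ioo (0 : ℝ) 1) (r : ℕ)
    (hr1 : 1 ≤ r) (hrm : r ≤ m + 1) :
    Rminus m N β r ≤ Rplus m N β r := by
  by_contra h
  push_neg at h
  have h1 := (Rminus_spec m N β hβ r).2
  have h2 := (Rplus_spec m N β hβ r hr1 hrm).2
  have h3 : Fwindow m N r (Rplus m N β r) ≤ Fwindow m N r (Rminus m N β r - 1) :=
    Fwindow_mono_t m N r (by omega)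
  linarith [hβ.2]

lemma Rplus_mono (m N : ℕ) (β : ℝ) (hβ : β ∈ Set.Ioo (0 : ℝ) 1) {r r' : ℕ}
    (hr1 : 1 ≤ r) (hrr : r ≤ r') (hrm : r' ≤ m + 1) :
    Rplus m N β r ≤ Rplus m N β r' := by
  apply Nat.sInf_le
  have h := Rplus_spec m N β hβ r' (le_trans hr1 hrr) hrm
  refine ⟨h.1, ?_⟩
  have hle : Rplus m N β r' ≤ N + 1 := (Finset.mem_Icc.1 h.1).2
  have := Fwindow_anti m N hr1 hrr hrm hle
  linarith [h.2]

lemma Rminus_mono (m N : ℕ) (β : ℝ) (hβ : β ∈ Set.Ioo (0 : ℝ) 1) {r r' : ℕ}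
    (hr1 : 1 ≤ r) (hrr : r ≤ r') (hrm : r' ≤ m + 1) :
    Rminus m N β r ≤ Rminus m N β r' := by
  apply le_csSup (Rminus_bddAbove m N β r')
  have h := Rminus_spec m N β hβ r
  refine ⟨h.1, ?_⟩
  have hle : Rminus m N β r ≤ N + 1 := (Finset.mem_Icc.1 h.1).2
  have := Fwindow_anti m N hr1 hrr hrm (t := Rminus m N β r - 1) (by omega)
  linarith [h.2]


/-! ### Order statistics -/

lemma count_lt_iff {n : ℕ} {f : Fin n → ℝ} (hf : Monotone f) (η : ℝ) (j : Fin n) :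
    f j < η ↔ (j : ℕ) < (Finset.univ.filter fun i => f i < η).card := by
  constructor
  · intro h
    have hsub : Finset.Iic j ⊆ Finset.univ.filter fun i => f i < η := by
      intro i hi
      rw [Finset.mem_Iic] at hi
      simp only [Finset.mem_filter, Finset.mem_univ, true_and]
      exact lt_of_le_of_lt (hf hi) h
    have hc := Finset.card_le_card hsub
    rw [Fin.card_Iic] at hc
    omega
  · intro h
    by_contra hc
    push_neg at hc
    have hsub : (Finset.univ.filter fun i => f i < η) ⊆ Finset.Iio j := by
      intro i hi
      simp only [Finset.mem_filter, Finset.mem_univ, true_and] at hi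
      rw [Finset.mem_Iio]
      by_contra hij
      push_neg at hij
      exact absurd hi (not_lt.2 (hc.trans (hf hij)))
    have := Finset.card_le_card hsub
    rw [Fin.card_Iio] at this
    omega

lemma filter_card {n : ℕ} (f : Fin n → ℝ) (η : ℝ) :
    (Finset.univ.filter fun i => orderStat f i < η).card
      = (Finset.univ.filter fun i => f i < η).card := by
  apply Finset.card_bij (fun i _ => Tuple.sort f i)
  · intro a ha
    simp only [Finset.mem_filter, Finset.mem_univ, true_and] at *
    exact ha
  · intro a _ b _ h
    exact (Tuple.sort f).injective h
  · intro b hb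
    simp only [Finset.mem_filter, Finset.mem_univ, true_and] at hb
    refine ⟨(Tuple.sort f).symm b, ?_, ?_⟩
    · simp only [Finset.mem_filter, Finset.mem_univ, true_and]
      show f (Tuple.sort f ((Tuple.sort f).symm b)) < η
      rwa [Equiv.apply_symm_apply]
    · exact Equiv.apply_symm_apply _ _

lemma rankOf_le (m : ℕ) (S : Fin m → ℝ) (η : ℝ) : rankOf m S η ≤ m + 1 := by
  unfold rankOf
  have := Finset.card_filter_le Finset.univ (fun i => S i < η)
  rw [Finset.card_univ, Fintype.card_fin] at this
  omega

lemma rank_le_iff (m : ℕ) (hm : 0 < m) (S : Fin m → ℝ) (η : ℝ) (t : ℕ) (ht : t ≤ m + 1) :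
    ((η : EReal) ≤ realSorted m S t ↔ rankOf m S η ≤ t) := by
  unfold realSorted
  by_cases h : 1 ≤ t ∧ t ≤ m
  · have hmono : Monotone (orderStat S) := Tuple.monotone_sort S
    rw [dif_pos h, EReal.coe_le_coe_iff, ← not_lt,
      count_lt_iff hmono η ⟨t - 1, by omega⟩, filter_card]
    unfold rankOf
    simp only [not_lt]
    constructor
    · intro hh; omega
    · intro hh; omega
  · rw [dif_neg h]
    have htm : t = 0 ∨ t = m + 1 := by omega
    rcases htm with rfl | rfl
    · rw [if_neg (by omega)]
      constructor
      · intro hle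
        exact absurd (le_bot_iff.1 hle) (EReal.coe_ne_bot η)
      · intro hh
        exact absurd hh (by unfold rankOf; omega)
    · rw [if_pos rfl]
      exact ⟨fun _ => rankOf_le m S η, fun _ => le_top⟩

/-! ### Synthetic order statistics -/

section Synth

variable {N : ℕ} (g : Fin N → ℝ)

lemma synth_top {t : ℕ} (h : N < t ∨ t = 0) : synthSorted N g t = ⊤ := by
  unfold synthSorted
  rw [dif_neg (by omega)]

lemma synth_coe {t : ℕ} (h1 : 1 ≤ t) (h2 : t ≤ N) :
    synthSorted N g t = ((orderStat g ⟨t - 1, by omega⟩ : ℝ) : EReal) := by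
  unfold synthSorted
  rw [dif_pos ⟨h1, h2⟩]

lemma synth_mono {t u : ℕ} (ht : 1 ≤ t) (htu : t ≤ u) :
    synthSorted N g t ≤ synthSorted N g u := by
  by_cases hu : u ≤ N
  · rw [synth_coe g ht (le_trans htu hu), synth_coe g (le_trans ht htu) hu]
    have := Tuple.monotone_sort g
      (show (⟨t - 1, by omega⟩ : Fin N) ≤ ⟨u - 1, by omega⟩ from Fin.mk_le_mk.2 (by omega))
    exact_mod_cast this
  · rw [synth_top g (t := u) (Or.inl (by omega))]
    exact le_top

lemma synth_strictmono (hg : Function.Injective g) {t u : ℕ} (ht : 1 ≤ t) (htu : t < u)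
    (hu : u ≤ N + 1) : synthSorted N g t < synthSorted N g u := by
  have htN : t ≤ N := by omega
  rw [synth_coe g ht htN]
  by_cases hu' : u ≤ N
  · rw [synth_coe g (by omega) hu']
    have hsm : StrictMono (orderStat g) :=
      (Tuple.monotone_sort g).strictMono_of_injective (hg.comp (Tuple.sort g).injective)
    have := hsm (show (⟨t - 1, by omega⟩ : Fin N) < ⟨u - 1, by omega⟩ from Fin.mk_lt_mk.2 (by omega))
    exact_mod_cast this
  · rw [synth_top g (t := u) (Or.inl (by omega))]
    exact EReal.coe_lt_top _

lemma synth_le_iff (hg : Function.Injective g) {t u : ℕ} (ht1 : 1 ≤ t) (htN : t ≤ N + 1)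
    (hu1 : 1 ≤ u) (huN : u ≤ N + 1) :
    synthSorted N g t ≤ synthSorted N g u ↔ t ≤ u := by
  constructor
  · intro h
    by_contra hc
    push_neg at hc
    exact absurd h (not_le.2 (synth_strictmono g hg hu1 hc htN))
  · exact synth_mono g ht1

lemma synth_ne {η : ℝ} (hη : ∀ j, g j ≠ η) (t : ℕ) : synthSorted N g t ≠ (η : EReal) := by
  unfold synthSorted
  split
  · intro h
    exact hη _ (EReal.coe_eq_coe_iff.1 h)
  · intro h
    exact EReal.coe_ne_top η h.symm

lemma synth_le_coe {η : ℝ} {t : ℕ} (h : synthSorted N g t ≤ (η : EReal)) : t ≤ N := by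
  by_contra hc
  push_neg at hc
  rw [synth_top g (Or.inl hc)] at h
  exact EReal.coe_ne_top η (top_le_iff.1 h)

end Synth

end SPIAux


namespace SPIAux

lemma NN_ub (m N : ℕ) (β : ℝ) (g : Fin N → ℝ) (r : ℕ) (η : ℝ) {j : ℕ}
    (h1 : Rminus m N β r ≤ j) (h2 : j ≤ Rplus m N β r)
    (h3 : synthSorted N g j ≤ (η : EReal)) :
    synthSorted N g j ≤ NNminus m N β g r η :=
  le_sSup ⟨j, h1, h2, rfl, h3⟩

lemma NN_spec (m N : ℕ) (β : ℝ) (g : Fin N → ℝ) (r : ℕ) (η : ℝ)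
    (hmp : Rminus m N β r ≤ Rplus m N β r)
    (hL : synthSorted N g (Rminus m N β r) ≤ (η : EReal)) :
    ∃ j0 : ℕ, Rminus m N β r ≤ j0 ∧ j0 ≤ Rplus m N β r ∧
      NNminus m N β g r η = synthSorted N g j0 ∧ synthSorted N g j0 ≤ (η : EReal) := by
  set A : Set EReal := {x : EReal | ∃ j : ℕ, Rminus m N β r ≤ j ∧ j ≤ Rplus m N β r ∧
    x = synthSorted N g j ∧ x ≤ (η : EReal)} with hA
  have hne : A.Nonempty := ⟨synthSorted N g (Rminus m N β r),
    Rminus m N β r, le_rfl, hmp, rfl, hL⟩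
  have hfin : A.Finite := by
    apply Set.Finite.subset ((Set.finite_Icc (Rminus m N β r) (Rplus m N β r)).image
      (synthSorted N g))
    rintro x ⟨j, hj1, hj2, rfl, -⟩
    exact ⟨j, ⟨hj1, hj2⟩, rfl⟩
  have hmem : sSup A ∈ A := hne.csSup_mem hfin
  obtain ⟨j0, h1, h2, h3, h4⟩ := hmem
  exact ⟨j0, h1, h2, h3 ▸ rfl, h3 ▸ h4⟩

lemma rtil_plus_iff (m N : ℕ) (hm : 0 < m) (β α : ℝ) (hβ : β ∈ Set.Ioo (0 : ℝ) 1)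
    (S : Fin m → ℝ) (η : ℝ) :
    ((η : EReal) ≤ realSorted m S (RtilPlus m N β α)) ↔
      Rplus m N β (rankOf m S η) ≤ qIdx N α := by
  have hr1 : 1 ≤ rankOf m S η := Nat.le_add_right 1 _
  have hrm : rankOf m S η ≤ m + 1 := rankOf_le m S η
  have hbdd : BddAbove {r' | r' ∈ Finset.Icc 1 (m + 1) ∧ Rplus m N β r' ≤ qIdx N α} :=
    ⟨m + 1, fun x hx => (Finset.mem_Icc.1 hx.1).2⟩
  constructor
  · intro h
    by_cases hne : {r' | r' ∈ Finset.Icc 1 (m + 1) ∧ Rplus m N β r' ≤ qIdx N α}.Nonempty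
    · have hmem := Nat.sSup_mem hne hbdd
      have h1 := Finset.mem_Icc.1 hmem.1
      have hrank : rankOf m S η ≤ RtilPlus m N β α :=
        (rank_le_iff m hm S η _ h1.2).1 h
      exact le_trans (Rplus_mono m N β hβ hr1 hrank h1.2) hmem.2
    · rw [Set.not_nonempty_iff_eq_empty] at hne
      exfalso
      have h0 : RtilPlus m N β α = 0 := by
        unfold RtilPlus
        rw [hne, csSup_empty]; rfl
      rw [h0] at h
      unfold realSorted at h
      rw [dif_neg (by omega), if_neg (by omega)] at h
      exact EReal.coe_ne_bot η (le_bot_iff.1 h)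
  · intro h
    have hrank : rankOf m S η ≤ RtilPlus m N β α :=
      le_csSup hbdd ⟨Finset.mem_Icc.2 ⟨hr1, hrm⟩, h⟩
    have hne : {r' | r' ∈ Finset.Icc 1 (m + 1) ∧ Rplus m N β r' ≤ qIdx N α}.Nonempty :=
      ⟨rankOf m S η, Finset.mem_Icc.2 ⟨hr1, hrm⟩, h⟩
    have hle : RtilPlus m N β α ≤ m + 1 :=
      (Finset.mem_Icc.1 (Nat.sSup_mem hne hbdd).1).2
    exact (rank_le_iff m hm S η _ hle).2 hrank

lemma rtil_minus_iff (m N : ℕ) (hm : 0 < m) (β α : ℝ) (hβ : β ∈ Set.Ioo (0 : ℝ) 1)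
    (S : Fin m → ℝ) (η : ℝ) :
    ((η : EReal) ≤ realSorted m S (RtilMinus m N β α)) ↔
      Rminus m N β (rankOf m S η) ≤ qIdx N α := by
  have hr1 : 1 ≤ rankOf m S η := Nat.le_add_right 1 _
  have hrm : rankOf m S η ≤ m + 1 := rankOf_le m S η
  have hbdd : BddAbove {r' | r' ∈ Finset.Icc 1 (m + 1) ∧ Rminus m N β r' ≤ qIdx N α} :=
    ⟨m + 1, fun x hx => (Finset.mem_Icc.1 hx.1).2⟩
  constructor
  · intro h
    by_cases hne : {r' | r' ∈ Finset.Icc 1 (m + 1) ∧ Rminus m N β r' ≤ qIdx N α}.Nonempty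
    · have hmem := Nat.sSup_mem hne hbdd
      have h1 := Finset.mem_Icc.1 hmem.1
      have hrank : rankOf m S η ≤ RtilMinus m N β α :=
        (rank_le_iff m hm S η _ h1.2).1 h
      exact le_trans (Rminus_mono m N β hβ hr1 hrank h1.2) hmem.2
    · rw [Set.not_nonempty_iff_eq_empty] at hne
      exfalso
      have h0 : RtilMinus m N β α = 0 := by
        unfold RtilMinus
        rw [hne, csSup_empty]; rfl
      rw [h0] at h
      unfold realSorted at h
      rw [dif_neg (by omega), if_neg (by omega)] at h
      exact EReal.coe_ne_bot η (le_bot_iff.1 h)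
  · intro h
    have hrank : rankOf m S η ≤ RtilMinus m N β α :=
      le_csSup hbdd ⟨Finset.mem_Icc.2 ⟨hr1, hrm⟩, h⟩
    have hne : {r' | r' ∈ Finset.Icc 1 (m + 1) ∧ Rminus m N β r' ≤ qIdx N α}.Nonempty :=
      ⟨rankOf m S η, Finset.mem_Icc.2 ⟨hr1, hrm⟩, h⟩
    have hle : RtilMinus m N β α ≤ m + 1 :=
      (Finset.mem_Icc.1 (Nat.sSup_mem hne hbdd).1).2
    exact (rank_le_iff m hm S η _ hle).2 hrank

lemma key_iff (m N : ℕ) (hm : 0 < m) (hN : 0 < N) (α β : ℝ)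
    (hα : α ∈ Set.Ioo (0 : ℝ) 1) (hβ : β ∈ Set.Ioo (0 : ℝ) 1)
    (S : Fin m → ℝ) (g : Fin N → ℝ) (hg : Function.Injective g)
    (η : ℝ) (hη : ∀ j, g j ≠ η) :
    (transport m N β S g η ≤ synthQuantile N g α ↔
      (η : EReal) ≤ fastThreshold m N β α S g) := by
  have hr1 : 1 ≤ rankOf m S η := Nat.le_add_right 1 _
  have hrm : rankOf m S η ≤ m + 1 := rankOf_le m S η
  have hq1 : 1 ≤ qIdx N α := by
    have : (0 : ℝ) < (1 - α) * ((N : ℝ) + 1) := by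
      have h1 : (0:ℝ) < 1 - α := by linarith [hα.2]
      have h2 : (0:ℝ) < (N : ℝ) + 1 := by positivity
      positivity
    exact Nat.one_le_iff_ne_zero.2 (Nat.ceil_pos.2 this).ne'
  have hqN : qIdx N α ≤ N + 1 := by
    have h1 : (1 - α) * ((N : ℝ) + 1) ≤ ((N : ℝ) + 1) := by
      have h2 : (0:ℝ) ≤ (N : ℝ) + 1 := by positivity
      nlinarith [hα.1]
    unfold qIdx
    rw [Nat.ceil_le]
    push_cast
    linarith
  -- window facts
  have hRm := Rminus_spec m N β hβ (rankOf m S η)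
  have hRp := Rplus_spec m N β hβ (rankOf m S η) hr1 hrm
  have hRm1 : 1 ≤ Rminus m N β (rankOf m S η) := (Finset.mem_Icc.1 hRm.1).1
  have hRmN : Rminus m N β (rankOf m S η) ≤ N + 1 := (Finset.mem_Icc.1 hRm.1).2
  have hRp1 : 1 ≤ Rplus m N β (rankOf m S η) := (Finset.mem_Icc.1 hRp.1).1
  have hRpN : Rplus m N β (rankOf m S η) ≤ N + 1 := (Finset.mem_Icc.1 hRp.1).2
  have hmp : Rminus m N β (rankOf m S η) ≤ Rplus m N β (rankOf m S η) :=
    Rminus_le_Rplus m N β hβ (rankOf m S η) hr1 hrm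
  have hRHS : ((η : EReal) ≤ fastThreshold m N β α S g) ↔
      (((η : EReal) ≤ synthSorted N g (qIdx N α + 1) ∧
        Rminus m N β (rankOf m S η) ≤ qIdx N α) ∨
        Rplus m N β (rankOf m S η) ≤ qIdx N α) := by
    unfold fastThreshold
    rw [le_max_iff, le_min_iff, rtil_plus_iff m N hm β α hβ S η,
      rtil_minus_iff m N hm β α hβ S η]
  rw [hRHS]
  show (transport m N β S g η ≤ synthSorted N g (qIdx N α) ↔ _)
  unfold transport windowHi windowLo
  split_ifs with hU hL
  · -- Case A : U ≤ η
    have hRpN' : Rplus m N β (rankOf m S η) ≤ N := synth_le_coe g hU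
    constructor
    · intro hLHS
      exact Or.inr ((synth_le_iff g hg hRp1 hRpN hq1 hqN).1 hLHS)
    · rintro (⟨hq', hRmq⟩ | hRpq)
      · have hq'' : (η : EReal) < synthSorted N g (qIdx N α + 1) :=
          lt_of_le_of_ne hq' (fun h => synth_ne g hη _ h.symm)
        have hlt : synthSorted N g (Rplus m N β (rankOf m S η)) <
            synthSorted N g (qIdx N α + 1) := lt_of_le_of_lt hU hq''
        have hRpq : Rplus m N β (rankOf m S η) ≤ qIdx N α := by
          by_contra hcon
          push_neg at hcon
          have := synth_mono g (t := qIdx N α + 1) (u := Rplus m N β (rankOf m S η))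
            (by omega) (by omega)
          exact absurd (lt_of_le_of_lt this hlt) (lt_irrefl _)
        exact (synth_le_iff g hg hRp1 hRpN hq1 hqN).2 hRpq
      · exact (synth_le_iff g hg hRp1 hRpN hq1 hqN).2 hRpq
  · -- Case B : L ≤ η < U
    obtain ⟨j0, hj0m, hj0p, hNNeq, hj0le⟩ := NN_spec m N β g (rankOf m S η) η hmp hL
    rw [hNNeq]
    have hj01 : 1 ≤ j0 := le_trans hRm1 hj0m
    have hj0N : j0 ≤ N := synth_le_coe g hj0le
    constructor
    · intro hLHS
      by_cases hRpq : Rplus m N β (rankOf m S η) ≤ qIdx N α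
      · exact Or.inr hRpq
      push_neg at hRpq
      left
      have hRmj : synthSorted N g (Rminus m N β (rankOf m S η)) ≤ synthSorted N g j0 := by
        have := NN_ub m N β g (rankOf m S η) η le_rfl hmp hL
        rwa [hNNeq] at this
      have hRmq : Rminus m N β (rankOf m S η) ≤ qIdx N α :=
        (synth_le_iff g hg hRm1 hRmN hq1 hqN).1 (le_trans hRmj hLHS)
      refine ⟨?_, hRmq⟩
      by_contra hcon
      push_neg at hcon
      have hqle : synthSorted N g (qIdx N α + 1) ≤ (η : EReal) := le_of_lt hcon
      have hub := NN_ub m N β g (rankOf m S η) η (j := qIdx N α + 1) (by omega) (by omega) hqle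
      rw [hNNeq] at hub
      have hstrict : synthSorted N g (qIdx N α) < synthSorted N g (qIdx N α + 1) :=
        synth_strictmono g hg hq1 (by omega) (by omega)
      exact absurd (lt_of_lt_of_le hstrict (le_trans hub hLHS)) (lt_irrefl _)
    · rintro (⟨hq', hRmq⟩ | hRpq)
      · have hq'' : (η : EReal) < synthSorted N g (qIdx N α + 1) :=
          lt_of_le_of_ne hq' (fun h => synth_ne g hη _ h.symm)
        have hj0q : j0 ≤ qIdx N α := by
          by_contra hcon
          push_neg at hcon
          have h1 := synth_mono g (t := qIdx N α + 1) (u := j0) (by omega) (by omega)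
          exact absurd (lt_of_lt_of_le hq'' (le_trans h1 hj0le)) (lt_irrefl _)
        exact synth_mono g hj01 hj0q
      · have h2 : (η : EReal) < synthSorted N g (Rplus m N β (rankOf m S η)) := not_le.1 hU
        exact le_trans hj0le
          (le_of_lt (lt_of_lt_of_le h2 (synth_mono g hRp1 hRpq)))
  · -- Case C : η < L
    have hL' : (η : EReal) < synthSorted N g (Rminus m N β (rankOf m S η)) := not_le.1 hL
    constructor
    · intro hLHS
      left
      have hRmq : Rminus m N β (rankOf m S η) ≤ qIdx N α :=
        (synth_le_iff g hg hRm1 hRmN hq1 hqN).1 hLHS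
      exact ⟨le_of_lt (lt_of_lt_of_le hL' (synth_mono g hRm1 (by omega))), hRmq⟩
    · rintro (⟨-, hRmq⟩ | hRpq)
      · exact (synth_le_iff g hg hRm1 hRmN hq1 hqN).2 hRmq
      · exact (synth_le_iff g hg hRm1 hRmN hq1 hqN).2 (le_trans hmp hRpq)

end SPIAux

/-- Proposition 1: the SPI prediction set `Ĉ` and the fast prediction set
`Ĉ^fast` agree almost surely: the symmetric difference of the two coverage events for a test
point `(X_{m+1}, Y_{m+1})` is a null event, provided the synthetic scores are almost surely
pairwise distinct and almost surely avoid any fixed value (continuous marginals), and are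
independent of the test point. -/
theorem spi_fast_prediction_set_equivalence
    {Ω 𝒳 𝒴 : Type*} [MeasurableSpace Ω] [MeasurableSpace 𝒳] [MeasurableSpace 𝒴]
    (Pr : MeasureTheory.Measure Ω) [IsProbabilityMeasure Pr]
    (m N : ℕ) (hm : 0 < m) (hN : 0 < N)
    (α β : ℝ) (hα : α ∈ Set.Ioo (0 : ℝ) 1) (hβ : β ∈ Set.Ioo (0 : ℝ) 1)
    (s : 𝒳 → 𝒴 → ℝ) (hs : Measurable fun p : 𝒳 × 𝒴 => s p.1 p.2)
    (S : Fin m → Ω → ℝ) (G : Fin N → Ω → ℝ) (hGmeas : ∀ j, Measurable (G j))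
    (X : Ω → 𝒳) (Y : Ω → 𝒴) (hX : Measurable X) (hY : Measurable Y)
    (hGdistinct : ∀ᵐ ω ∂Pr, Function.Injective fun j => G j ω)
    (hGnoatom : ∀ c : ℝ, Pr {ω | ∃ j, G j ω = c} = 0)
    (hindep : IndepFun (fun ω => (X ω, Y ω)) (fun ω => fun j => G j ω) Pr) :
    Pr (symmDiff
        {ω | transport m N β (fun i => S i ω) (fun j => G j ω) (s (X ω) (Y ω))
          ≤ synthQuantile N (fun j => G j ω) α}
        {ω | ((s (X ω) (Y ω) : ℝ) : EReal)
          ≤ fastThreshold m N β α (fun i => S i ω) (fun j => G j ω)}) = 0 := by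
  classical
  have hZ : Measurable fun ω => s (X ω) (Y ω) := hs.comp (hX.prodMk hY)
  have hW : Measurable fun ω => fun j => G j ω :=
    measurable_pi_lambda _ fun j => hGmeas j
  have hZW : IndepFun (fun ω => s (X ω) (Y ω)) (fun ω => fun j => G j ω) Pr :=
    hindep.comp hs measurable_id
  have hA : MeasurableSet {p : ℝ × (Fin N → ℝ) | ∃ j, p.2 j = p.1} := by
    have he : {p : ℝ × (Fin N → ℝ) | ∃ j, p.2 j = p.1}
        = ⋃ j, {p : ℝ × (Fin N → ℝ) | p.2 j = p.1} := by
      ext p; simp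
    rw [he]
    exact MeasurableSet.iUnion fun j =>
      measurableSet_eq_fun (measurable_snd.eval (a := j)) measurable_fst
  have hbad : Pr {ω | ∃ j, G j ω = s (X ω) (Y ω)} = 0 := by
    have hpre : {ω | ∃ j, G j ω = s (X ω) (Y ω)}
        = (fun ω => (s (X ω) (Y ω), fun j => G j ω)) ⁻¹'
            {p : ℝ × (Fin N → ℝ) | ∃ j, p.2 j = p.1} := rfl
    rw [hpre, ← Measure.map_apply (hZ.prodMk hW) hA,
      (ProbabilityTheory.indepFun_iff_map_prod_eq_prod_map_map hZ.aemeasurable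
        hW.aemeasurable).1 hZW,
      Measure.prod_apply hA]
    have hzero : ∀ z : ℝ,
        (Pr.map (fun ω => fun j => G j ω))
          (Prod.mk z ⁻¹' {p : ℝ × (Fin N → ℝ) | ∃ j, p.2 j = p.1}) = 0 := by
      intro z
      have hmeas : MeasurableSet {w : Fin N → ℝ | ∃ j, w j = z} := by
        have he : {w : Fin N → ℝ | ∃ j, w j = z} = ⋃ j, {w : Fin N → ℝ | w j = z} := by
          ext w; simp
        rw [he]
        exact MeasurableSet.iUnion fun j =>
          measurableSet_eq_fun (measurable_pi_apply j) measurable_const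
      have hpre2 : Prod.mk z ⁻¹' {p : ℝ × (Fin N → ℝ) | ∃ j, p.2 j = p.1}
          = {w : Fin N → ℝ | ∃ j, w j = z} := rfl
      rw [hpre2, Measure.map_apply hW hmeas]
      exact hGnoatom z
    rw [MeasureTheory.lintegral_congr hzero, MeasureTheory.lintegral_zero]
  have hbadInj : Pr {ω | ¬ Function.Injective fun j => G j ω} = 0 := ae_iff.1 hGdistinct
  apply measure_mono_null ?_
    (measure_union_null hbadInj hbad)
  intro ω hω
  by_contra hb
  simp only [Set.mem_union, Set.mem_setOf_eq] at hb
  push_neg at hb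
  obtain ⟨hinj, hnoeq⟩ := hb
  have hkey := SPIAux.key_iff m N hm hN α β hα hβ (fun i => S i ω) (fun j => G j ω)
    hinj (s (X ω) (Y ω)) (fun j h => hnoeq j h)
  rw [Set.mem_symmDiff] at hω
  rcases hω with ⟨h1, h2⟩ | ⟨h1, h2⟩
  · exact h2 (hkey.1 h1)
  · exact h2 (hkey.2 h1)
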